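/- arXiv:1301.4446 — 5 statements merged into one kernel-verified Lean document; each statement's English description precedes it below -/
import Mathlib

section
/- Let G be a finitely generated residually finite group, and let H be a finite subgroup of G whose centralizer C_G(H) = {g ∈ G : gh = hg for all h ∈ H} is finite. Suppose moreover that G has only finitely many conjugacy classes of finite subgroups (i.e. the set of finite subgroups of G is partitioned into finitely many orbits under conjugation by G). Then the canonical projection f : Aut(G) → Out(G) splits virtually. -/
section Defs

variable (G : Type*) [Group G]

/-- The subgroup of inner automorphisms of `G`. -/
def Inn : Subgroup (MulAut G) := (MulAut.conj : G →* MulAut G).range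

instance Inn.normal : (Inn G).Normal := by
  constructor
  intro n hn φ
  obtain ⟨g, rfl⟩ := hn
  refine ⟨φ g, ?_⟩
  ext x
  simp only [MulAut.conj_apply, MulAut.mul_apply, map_mul, map_inv, MulAut.inv_def,
    MulEquiv.apply_symm_apply]

/-- The outer automorphism group `Out(G) = Aut(G)/Inn(G)`. -/
def Out := MulAut G ⧸ Inn G

instance : Group (Out G) := inferInstanceAs (Group (MulAut G ⧸ Inn G))

/-- The canonical projection `Aut(G) → Out(G)`. -/
def outProj : MulAut G →* Out G := QuotientGroup.mk' (Inn G)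

/-- A surjective homomorphism `f : A → B` splits virtually if it admits a section on some
finite-index subgroup of `B`. -/
def SplitsVirtually {A B : Type*} [Group A] [Group B] (f : A →* B) : Prop :=
  ∃ B' : Subgroup B, B'.FiniteIndex ∧ ∃ s : (↥B') →* A, ∀ x : B', f (s x) = (x : B)

/-- A group is residually finite if every nontrivial element survives in some finite quotient. -/
def ResiduallyFinite (G : Type*) [Group G] : Prop :=
  ∀ g : G, g ≠ 1 → ∃ (F : Type) (_ : Group F) (_ : Finite F) (φ : G →* F), φ g ≠ 1

/-- A group is residually `p` if every nontrivial element survives in some finite `p`-group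
quotient. -/
def ResiduallyP (p : ℕ) (G : Type*) [Group G] : Prop :=
  ∀ g : G, g ≠ 1 →
    ∃ (F : Type) (_ : Group F) (_ : Finite F) (φ : G →* F), IsPGroup p F ∧ φ g ≠ 1

/-- A group is virtually residually `p` if some finite-index subgroup is residually `p`. -/
def VirtuallyResiduallyP (p : ℕ) (G : Type*) [Group G] : Prop :=
  ∃ K : Subgroup G, K.FiniteIndex ∧ ResiduallyP p ↥K

/-- `Aut_{H̲}(G)`: the subgroup of automorphisms of `G` fixing `H` pointwise. -/
def autFix (H : Subgroup G) : Subgroup (MulAut G) where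
  carrier := {φ | ∀ h ∈ H, φ h = h}
  one_mem' := fun _ _ => rfl
  mul_mem' := by
    intro a b ha hb h hh
    show a (b h) = h
    rw [hb h hh, ha h hh]
  inv_mem' := by
    intro a ha h hh
    show a⁻¹ h = h
    calc a⁻¹ h = a⁻¹ (a h) := by rw [ha h hh]
    _ = h := by rw [MulAut.inv_def]; exact a.symm_apply_apply h

/-- `Aut_H(G)`: the subgroup of automorphisms of `G` mapping `H` onto itself. -/
def autSetwise (H : Subgroup G) : Subgroup (MulAut G) where
  carrier := {φ | ∀ g : G, φ g ∈ H ↔ g ∈ H}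
  one_mem' := fun _ => Iff.rfl
  mul_mem' := by
    intro a b ha hb g
    show a (b g) ∈ H ↔ g ∈ H
    rw [ha, hb]
  inv_mem' := by
    intro a ha g
    show a⁻¹ g ∈ H ↔ g ∈ H
    have h1 : a (a⁻¹ g) = g := by rw [MulAut.inv_def]; exact a.apply_symm_apply g
    have := ha (a⁻¹ g)
    rw [h1] at this
    exact this.symm

theorem mem_autSetwise {H : Subgroup G} {φ : MulAut G} :
    φ ∈ autSetwise G H ↔ ∀ g : G, φ g ∈ H ↔ g ∈ H := Iff.rfl

/-- `H` is an Aut-splitting subgroup of `G` if the restriction of `Aut(G) → Out(G)` to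
`Aut_{H̲}(G)` has finite kernel and an image of finite index in `Out(G)`. -/
def IsAutSplitting (H : Subgroup G) : Prop :=
  Finite ((outProj G).comp (autFix G H).subtype).ker ∧
    ((autFix G H).map (outProj G)).FiniteIndex

/-- The conjugate `gKg⁻¹` of a subgroup. -/
def conjSubgroup (g : G) (K : Subgroup G) : Subgroup G :=
  K.map (MulAut.conj g).toMonoidHom

end Defs

section Aux

variable {G : Type*} [Group G]

lemma finite_homs (hfg : Group.FG G) (F : Type*) [Group F] [Finite F] :
    Finite (G →* F) := by
  obtain ⟨S, hS⟩ := hfg.1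
  refine Finite.of_injective (fun φ => (fun s : S => φ s)) ?_
  intro φ ψ h
  ext g
  have hg : g ∈ Subgroup.closure (S : Set G) := hS ▸ Subgroup.mem_top g
  induction hg using Subgroup.closure_induction with
  | mem x hx => exact congrFun h ⟨x, hx⟩
  | one => simp
  | mul x y _ _ hx hy => simp [map_mul, hx, hy]
  | inv x _ hx => simp [map_inv, hx]

/-- Separation: in a f.g. residually finite group, every nontrivial automorphism avoids
some finite-index subgroup of `Aut(G)`. -/
lemma aut_separation (hfg : Group.FG G) (hrf : ResiduallyFinite G)
    (α : MulAut G) (hα : α ≠ 1) :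
    ∃ N : Subgroup (MulAut G), N.FiniteIndex ∧ α ∉ N := by
  have hg : ∃ g : G, α g ≠ g := by
    by_contra h
    push_neg at h
    exact hα (by ext g; simp [h g])
  obtain ⟨g, hg⟩ := hg
  set x : G := α g * g⁻¹ with hx
  have hx1 : x ≠ 1 := by
    intro h
    apply hg
    have := congrArg (· * g) h
    simpa [hx, mul_assoc] using this
  obtain ⟨F, _, _, φ, hφ⟩ := hrf x hx1
  haveI : Finite (G →* F) := finite_homs hfg F
  set M : Subgroup G := ⨅ ψ : G →* F, ψ.ker with hM
  haveI hMn : M.Normal := by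
    constructor
    intro n hn c
    rw [hM, Subgroup.mem_iInf] at hn ⊢
    intro ψ
    exact (MonoidHom.normal_ker ψ).conj_mem n (hn ψ) c
  haveI hMfi : M.FiniteIndex := Subgroup.finiteIndex_iInf fun ψ => inferInstance
  have hchar : ∀ (e : MulAut G), M.map e.toMonoidHom = M := by
    have key : ∀ (e : MulAut G) (y : G), y ∈ M → e y ∈ M := by
      intro e y hy
      rw [hM, Subgroup.mem_iInf] at hy ⊢
      intro ψ
      have := hy (ψ.comp e.toMonoidHom)
      exact this
    intro e
    apply le_antisymm
    · rintro _ ⟨y, hy, rfl⟩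
      exact key e y hy
    · intro y hy
      exact ⟨e⁻¹ y, key e⁻¹ y hy, by simp [MulAut.inv_def]⟩
  have hxM : x ∉ M := by
    intro hxM
    rw [hM, Subgroup.mem_iInf] at hxM
    exact hφ (hxM φ)
  -- the induced map on the finite quotient
  let Φ : MulAut G →* MulAut (G ⧸ M) :=
    MonoidHom.mk' (fun e => QuotientGroup.congr M M e (hchar e)) (by
      intro e₁ e₂
      ext q
      induction q using QuotientGroup.induction_on with
      | H z => rfl)
  haveI : Finite (G ⧸ M) := M.finite_quotient_of_finiteIndex
  haveI : Finite (MulAut (G ⧸ M)) := by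
    refine Finite.of_injective (fun e => (e : G ⧸ M → G ⧸ M)) ?_
    intro a b h
    ext q
    exact congrFun h q
  refine ⟨Φ.ker, Subgroup.finiteIndex_ker Φ, ?_⟩
  intro hker
  rw [MonoidHom.mem_ker] at hker
  have : Φ α (↑g : G ⧸ M) = ↑g := by rw [hker]; rfl
  have hmk : ((α g : G) : G ⧸ M) = (g : G ⧸ M) := this
  rw [QuotientGroup.eq] at hmk
  apply hxM
  have h2 : (α g) * ((α g)⁻¹ * g) * (α g)⁻¹ ∈ M := hMn.conj_mem _ hmk (α g)
  have h3 := M.inv_mem h2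
  simpa [hx, mul_assoc] using h3

end Aux

section Aux2

variable {G : Type*} [Group G]

lemma conjSubgroup_conjSubgroup (g g' : G) (K : Subgroup G) :
    conjSubgroup G g (conjSubgroup G g' K) = conjSubgroup G (g * g') K := by
  unfold conjSubgroup
  rw [Subgroup.map_map]
  congr 1
  ext x
  simp [mul_assoc]

lemma conjSubgroup_one (K : Subgroup G) : conjSubgroup G 1 K = K := by
  unfold conjSubgroup
  ext x
  simp [Subgroup.mem_map]

lemma conjSubgroup_inv_conjSubgroup (g : G) (K : Subgroup G) :
    conjSubgroup G g⁻¹ (conjSubgroup G g K) = K := by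
  rw [conjSubgroup_conjSubgroup, inv_mul_cancel, conjSubgroup_one]

/-- The conjugacy setoid on subgroups. -/
def conjSetoid (G : Type*) [Group G] : Setoid (Subgroup G) where
  r K L := ∃ g : G, conjSubgroup G g K = L
  iseqv := by
    refine ⟨fun K => ⟨1, conjSubgroup_one K⟩, ?_, ?_⟩
    · rintro K L ⟨g, rfl⟩
      exact ⟨g⁻¹, conjSubgroup_inv_conjSubgroup g K⟩
    · rintro K L M ⟨g, rfl⟩ ⟨g', rfl⟩
      exact ⟨g' * g, (conjSubgroup_conjSubgroup g' g K).symm⟩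

lemma mem_autSetwise_iff_map_eq {H : Subgroup G} {φ : MulAut G} :
    φ ∈ autSetwise G H ↔ H.map φ.toMonoidHom = H := by
  rw [mem_autSetwise]
  constructor
  · intro h
    apply le_antisymm
    · rintro _ ⟨y, hy, rfl⟩
      exact (h y).mpr hy
    · intro y hy
      refine ⟨φ⁻¹ y, ?_, by simp [MulAut.inv_def]⟩
      have heq : φ (φ⁻¹ y) = y := by simp [MulAut.inv_def]
      apply (h (φ⁻¹ y)).mp
      rw [heq]
      exact hy
  · intro h g
    constructor
    · intro hg
      rw [← h] at hg
      obtain ⟨y, hy, hyy⟩ := hg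
      rwa [← φ.injective hyy]
    · intro hg
      rw [← h]
      exact ⟨g, hg, rfl⟩

lemma map_conjSubgroup (e : MulAut G) (g : G) (K : Subgroup G) :
    (conjSubgroup G g K).map e.toMonoidHom = conjSubgroup G (e g) (K.map e.toMonoidHom) := by
  unfold conjSubgroup
  rw [Subgroup.map_map, Subgroup.map_map]
  congr 1
  ext x
  simp [mul_assoc]

lemma map_toMonoidHom_mul (e₁ e₂ : MulAut G) (K : Subgroup G) :
    K.map (e₁ * e₂).toMonoidHom = (K.map e₂.toMonoidHom).map e₁.toMonoidHom := by
  rw [Subgroup.map_map]; rfl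

lemma autFix_le_autSetwise (H : Subgroup G) : autFix G H ≤ autSetwise G H := by
  intro φ hφ
  rw [mem_autSetwise]
  intro g
  constructor
  · intro hg
    have h2 : φ (φ g) = φ g := hφ _ hg
    have := φ.injective h2
    rwa [← this]
  · intro hg
    rw [hφ g hg]
    exact hg

end Aux2

section Aux3

open Pointwise

variable {G : Type*} [Group G]

/-- Restriction of a setwise-preserving automorphism to `H`. -/
def restrictAut (H : Subgroup G) (φ : ↥(autSetwise G H)) : MulAut ↥H where
  toFun x := ⟨φ.1 ↑x, ((mem_autSetwise G).mp φ.2 ↑x).mpr x.2⟩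
  invFun x := ⟨(φ.1)⁻¹ ↑x, by
    have hφ := (mem_autSetwise G).mp φ.2
    have heq : φ.1 ((φ.1)⁻¹ ↑x) = (x : G) := by simp [MulAut.inv_def]
    apply (hφ ((φ.1)⁻¹ ↑x)).mp
    rw [heq]
    exact x.2⟩
  left_inv x := Subtype.ext (by simp [MulAut.inv_def])
  right_inv x := Subtype.ext (by simp [MulAut.inv_def])
  map_mul' x y := Subtype.ext (map_mul φ.1 ↑x ↑y)

/-- Restriction as a group homomorphism. -/
def restrictHom (H : Subgroup G) : ↥(autSetwise G H) →* MulAut ↥H :=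
  MonoidHom.mk' (restrictAut H) (by
    intro φ ψ
    ext x
    rfl)

lemma ker_restrictHom (H : Subgroup G) :
    (restrictHom H).ker = (autFix G H).subgroupOf (autSetwise G H) := by
  ext φ
  rw [MonoidHom.mem_ker, Subgroup.mem_subgroupOf]
  constructor
  · intro h x hx
    have h2 := MulEquiv.ext_iff.mp h ⟨x, hx⟩
    exact congrArg Subtype.val h2
  · intro h
    apply MulEquiv.ext
    intro x
    exact Subtype.ext (h ↑x x.2)

lemma finite_mulAut (X : Type*) [Group X] [Finite X] : Finite (MulAut X) :=
  Finite.of_injective (fun e => (e : X → X)) (fun a b h => MulEquiv.ext (congrFun h))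

lemma sup_inn_finiteIndex (H : Subgroup G) [Finite ↥H]
    (hconj : ∃ S : Finset (Subgroup G), ∀ K : Subgroup G, Finite K →
      ∃ K' ∈ S, ∃ g : G, conjSubgroup G g K = K')
    (A'' : Subgroup (MulAut G)) (hle : A'' ≤ autFix G H)
    (hfi : (A''.subgroupOf (autFix G H)).FiniteIndex) :
    (A'' ⊔ Inn G).FiniteIndex := by
  classical
  obtain ⟨S, hS⟩ := hconj
  set B : Subgroup (MulAut G) := autSetwise G H with hB
  set C : Subgroup (MulAut G) := B ⊔ Inn G with hC
  set E : Subgroup (MulAut G) := A'' ⊔ Inn G with hE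
  have hAB : A'' ≤ B := hle.trans (autFix_le_autSetwise H)
  have hEC : E ≤ C := sup_le_sup_right hAB _
  -- Step 1 : the quotient by C is finite
  have hJ : ∀ a b : MulAut G, a⁻¹ * b ∈ C →
      (⟦H.map a.toMonoidHom⟧ : Quotient (conjSetoid G)) = ⟦H.map b.toMonoidHom⟧ := by
    intro a b hab
    have hmem : a⁻¹ * b ∈ ((Inn G : Set (MulAut G)) * (B : Set (MulAut G))) := by
      rw [← Subgroup.normal_mul, ← sup_comm]
      exact hab
    obtain ⟨ι, hι, β, hβ, hmul⟩ := hmem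
    obtain ⟨g, rfl⟩ := hι
    have hmul' : MulAut.conj g * β = a⁻¹ * b := hmul
    have hb : b = a * (MulAut.conj g * β) := by
      rw [hmul', ← mul_assoc, mul_inv_cancel, one_mul]
    have hmap : H.map b.toMonoidHom
        = conjSubgroup G (a g) (H.map a.toMonoidHom) := by
      rw [hb, map_toMonoidHom_mul, map_toMonoidHom_mul,
        mem_autSetwise_iff_map_eq.mp hβ]
      exact map_conjSubgroup a g H
    rw [hmap]
    exact Quotient.sound ⟨a g, rfl⟩
  have hJinj : ∀ a b : MulAut G,
      (⟦H.map a.toMonoidHom⟧ : Quotient (conjSetoid G)) = ⟦H.map b.toMonoidHom⟧ →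
      a⁻¹ * b ∈ C := by
    intro a b h
    obtain ⟨g, hg⟩ := Quotient.exact h
    have h1 : a⁻¹ * MulAut.conj g * a ∈ Inn G := by
      have := (Inn.normal G).conj_mem (MulAut.conj g) ⟨g, rfl⟩ a⁻¹
      simpa using this
    have h2 : a⁻¹ * (MulAut.conj g)⁻¹ * b ∈ B := by
      apply mem_autSetwise_iff_map_eq.mpr
      have hconjinv : (MulAut.conj g)⁻¹ = MulAut.conj g⁻¹ := (map_inv MulAut.conj g).symm
      rw [show a⁻¹ * (MulAut.conj g)⁻¹ * b = a⁻¹ * ((MulAut.conj g)⁻¹ * b) by group,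
        map_toMonoidHom_mul, map_toMonoidHom_mul, hconjinv]
      have hstep : (H.map b.toMonoidHom).map (MulAut.conj g⁻¹).toMonoidHom
          = H.map a.toMonoidHom := by
        rw [← hg]
        exact conjSubgroup_inv_conjSubgroup g _
      rw [hstep, ← map_toMonoidHom_mul, inv_mul_cancel]
      ext x
      constructor
      · rintro ⟨y, hy, rfl⟩
        exact hy
      · intro hx
        exact ⟨x, hx, rfl⟩
    have hdec : a⁻¹ * b = (a⁻¹ * MulAut.conj g * a) * (a⁻¹ * (MulAut.conj g)⁻¹ * b) := by
      group
    rw [hdec]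
    exact mul_mem (Subgroup.mem_sup_right h1) (Subgroup.mem_sup_left h2)
  have hfinmap : ∀ ψ : MulAut G, Finite ↥(H.map ψ.toMonoidHom) := by
    intro ψ
    have : (↑(H.map ψ.toMonoidHom) : Set G).Finite := by
      rw [Subgroup.coe_map]
      exact (Set.toFinite (H : Set G)).image _
    exact this.to_subtype
  have hrange : ∀ ψ : MulAut G, ∃ K' ∈ S,
      (⟦H.map ψ.toMonoidHom⟧ : Quotient (conjSetoid G)) = ⟦K'⟧ := by
    intro ψ
    obtain ⟨K', hK', g, hg⟩ := hS (H.map ψ.toMonoidHom) (hfinmap ψ)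
    exact ⟨K', hK', Quotient.sound ⟨g, hg⟩⟩
  have hCfin : Finite (MulAut G ⧸ C) := by
    set T : Finset (Quotient (conjSetoid G)) := S.image (fun K => ⟦K⟧) with hT
    let JQ : MulAut G ⧸ C → Quotient (conjSetoid G) :=
      fun q => Quotient.liftOn' q (fun ψ => (⟦H.map ψ.toMonoidHom⟧ : Quotient (conjSetoid G)))
        (by
          intro a b hab
          exact hJ a b ((QuotientGroup.leftRel_apply).mp hab))
    have hmemT : ∀ q, JQ q ∈ T := by
      intro q
      induction q using Quotient.inductionOn' with
      | h a =>
        obtain ⟨K', hK', hEq⟩ := hrange a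
        show (⟦H.map a.toMonoidHom⟧ : Quotient (conjSetoid G)) ∈ T
        rw [hEq]
        exact Finset.mem_image_of_mem _ hK'
    refine Finite.of_injective (fun q => (⟨JQ q, hmemT q⟩ : {x // x ∈ T})) ?_
    intro q₁ q₂ h
    have h' : JQ q₁ = JQ q₂ := congrArg Subtype.val h
    induction q₁ using Quotient.inductionOn' with
    | h a =>
    induction q₂ using Quotient.inductionOn' with
    | h b =>
    exact Quotient.sound' ((QuotientGroup.leftRel_apply).mpr (hJinj a b h'))
  haveI hCfi : C.FiniteIndex := @Subgroup.finiteIndex_of_finite_quotient _ _ C hCfin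
  -- Step 2 : A'' has finite index in B
  haveI : Finite (MulAut ↥H) := finite_mulAut ↥H
  haveI hkerfi : ((restrictHom H).ker).FiniteIndex := Subgroup.finiteIndex_ker _
  have hrel1 : A''.relIndex (autFix G H) ≠ 0 := hfi.index_ne_zero
  have hrel2 : (autFix G H).relIndex B ≠ 0 := by
    have : (autFix G H).subgroupOf B = (restrictHom H).ker := (ker_restrictHom H).symm
    have h2 : (autFix G H).relIndex B = ((restrictHom H).ker).index := by
      rw [Subgroup.relIndex, this]
    rw [h2]
    exact hkerfi.index_ne_zero
  haveI hABfi : (A''.subgroupOf B).FiniteIndex := by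
    constructor
    show A''.relIndex B ≠ 0
    rw [← Subgroup.relIndex_mul_relIndex A'' (autFix G H) B hle (autFix_le_autSetwise H)]
    exact mul_ne_zero hrel1 hrel2
  have hBQfin : Finite (↥B ⧸ A''.subgroupOf B) := Subgroup.finite_quotient_of_finiteIndex
  -- Step 3 : surjection onto the relative quotient of E in C
  have hsurj : Function.Surjective
      (Quotient.map' (fun b : ↥B => (⟨↑b, Subgroup.mem_sup_left b.2⟩ : ↥C))
        (by
          intro a b hab
          rw [QuotientGroup.leftRel_apply] at hab ⊢
          rw [Subgroup.mem_subgroupOf] at hab ⊢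
          exact Subgroup.mem_sup_left hab) :
        ↥B ⧸ A''.subgroupOf B → ↥C ⧸ E.subgroupOf C) := by
    intro q
    induction q using Quotient.inductionOn' with
    | h c =>
      have hc : (↑c : MulAut G) ∈ ((B : Set (MulAut G)) * (Inn G : Set (MulAut G))) := by
        rw [← Subgroup.mul_normal]
        exact c.2
      obtain ⟨β, hβ, ι, hι, hmul⟩ := hc
      refine ⟨Quotient.mk'' ⟨β, hβ⟩, ?_⟩
      show Quotient.mk'' (⟨β, Subgroup.mem_sup_left hβ⟩ : ↥C) = Quotient.mk'' c
      apply Quotient.sound'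
      rw [QuotientGroup.leftRel_apply, Subgroup.mem_subgroupOf]
      show β⁻¹ * (↑c : MulAut G) ∈ E
      have hmul' : β * ι = (↑c : MulAut G) := hmul
      rw [← hmul', ← mul_assoc, inv_mul_cancel, one_mul]
      exact Subgroup.mem_sup_right hι
  have hCQfin : Finite (↥C ⧸ E.subgroupOf C) := Finite.of_surjective _ hsurj
  have hrelEC : E.relIndex C ≠ 0 :=
    (@Subgroup.finiteIndex_of_finite_quotient _ _ (E.subgroupOf C) hCQfin).index_ne_zero
  constructor
  rw [← Subgroup.relIndex_mul_index hEC]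
  exact mul_ne_zero hrelEC hCfi.index_ne_zero

end Aux3


/-- If `G` is a finitely generated residually finite group, `H` is a finite
subgroup of `G` with finite centralizer, and `G` has finitely many conjugacy classes of finite
subgroups, then `Aut(G) → Out(G)` splits virtually. -/
theorem statement0 (G : Type*) [Group G] (hfg : Group.FG G) (hrf : ResiduallyFinite G)
    (H : Subgroup G) (hHfin : Finite H)
    (hcent : Finite (Subgroup.centralizer (H : Set G)))
    (hconj : ∃ S : Finset (Subgroup G), ∀ K : Subgroup G, Finite K →
      ∃ K' ∈ S, ∃ g : G, conjSubgroup G g K = K') :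
    SplitsVirtually (outProj G) := by
  classical
  set A : Subgroup (MulAut G) := autFix G H with hA
  set f : ↥A →* Out G := (outProj G).comp A.subtype with hf
  have hkerO : (outProj G).ker = Inn G := QuotientGroup.ker_mk' (Inn G)
  -- the kernel of `f` is finite
  have hconjA : ∀ g : G, g ∈ Subgroup.centralizer (H : Set G) → MulAut.conj g ∈ A := by
    intro g hg h hh
    have hcomm : h * g = g * h := Subgroup.mem_centralizer_iff.mp hg h hh
    show g * h * g⁻¹ = h
    rw [← hcomm, mul_assoc, mul_inv_cancel, mul_one]
  have hcmap : ∀ g : ↥(Subgroup.centralizer (H : Set G)),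
      (⟨MulAut.conj ↑g, hconjA ↑g g.2⟩ : ↥A) ∈ f.ker := by
    intro g
    rw [MonoidHom.mem_ker]
    show outProj G (MulAut.conj ↑g) = 1
    rw [← MonoidHom.mem_ker, hkerO]
    exact ⟨↑g, rfl⟩
  have hkerfin : Finite ↥f.ker := by
    refine Finite.of_surjective
      (fun g : ↥(Subgroup.centralizer (H : Set G)) =>
        (⟨⟨MulAut.conj ↑g, hconjA ↑g g.2⟩, hcmap g⟩ : ↥f.ker)) ?_
    intro k
    have hk := k.2
    rw [MonoidHom.mem_ker] at hk
    have hmem : ((↑k : ↥A) : MulAut G) ∈ (outProj G).ker := hk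
    rw [hkerO] at hmem
    obtain ⟨g, hg⟩ := hmem
    have hgc : g ∈ Subgroup.centralizer (H : Set G) := by
      rw [Subgroup.mem_centralizer_iff]
      intro h hh
      have hfix : ((↑k : ↥A) : MulAut G) h = h := (↑k : ↥A).2 h hh
      rw [← hg] at hfix
      have : g * h * g⁻¹ = h := hfix
      calc h * g = g * h * g⁻¹ * g := by rw [this]
      _ = g * h := by rw [mul_assoc, inv_mul_cancel, mul_one]
    exact ⟨⟨g, hgc⟩, Subtype.ext (Subtype.ext hg)⟩
  haveI : Finite ↥f.ker := hkerfin
  -- separate the kernel from a finite-index subgroup of `A`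
  have sep' : ∀ k : ↥f.ker, ∃ N : Subgroup ↥A,
      N.FiniteIndex ∧ (((↑k : ↥A) : MulAut G) ≠ 1 → (↑k : ↥A) ∉ N) := by
    intro k
    by_cases h : ((↑k : ↥A) : MulAut G) = 1
    · exact ⟨⊤, inferInstance, fun hne => absurd h hne⟩
    · obtain ⟨N, hNfi, hα⟩ := aut_separation hfg hrf _ h
      refine ⟨N.comap A.subtype, ?_, fun _ hmem => hα (Subgroup.mem_comap.mp hmem)⟩
      haveI := hNfi
      show (N.subgroupOf A).FiniteIndex
      infer_instance
  choose Nk hNfi hNk using sep'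
  set N : Subgroup ↥A := ⨅ k, Nk k with hN
  haveI hNfin : N.FiniteIndex := Subgroup.finiteIndex_iInf hNfi
  set pmap : ↥N →* Out G := f.comp N.subtype with hpmap
  have hpinj : Function.Injective pmap := by
    rw [injective_iff_map_eq_one]
    intro n hn
    have hnker : (↑n : ↥A) ∈ f.ker := by rw [MonoidHom.mem_ker]; exact hn
    have h1 : ((↑n : ↥A) : MulAut G) = 1 := by
      by_contra hne
      have hnot := hNk ⟨↑n, hnker⟩ hne
      have hin : (↑n : ↥A) ∈ Nk ⟨↑n, hnker⟩ := by
        have h3 : (↑n : ↥A) ∈ N := n.2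
        exact (Subgroup.mem_iInf.mp h3) _
      exact hnot hin
    exact Subtype.ext (Subtype.ext h1)
  refine ⟨pmap.range, ?_, ?_⟩
  · -- finite index
    have hrange : pmap.range = (N.map A.subtype).map (outProj G) := by
      have h1 : pmap = (outProj G).comp (A.subtype.comp N.subtype) := rfl
      rw [h1, MonoidHom.range_comp, MonoidHom.range_comp, Subgroup.range_subtype]
    set A'' : Subgroup (MulAut G) := N.map A.subtype with hA''
    have hrt : (outProj G).range = ⊤ :=
      MonoidHom.range_eq_top.mpr (QuotientGroup.mk'_surjective (Inn G))
    have hindex : (A''.map (outProj G)).index = (A'' ⊔ Inn G).index := by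
      rw [Subgroup.index_map, hkerO, hrt, Subgroup.index_top, mul_one]
    have hAle : A'' ≤ autFix G H := by
      rintro _ ⟨n, _, rfl⟩
      exact (↑n : ↥A).2
    have hsub : A''.subgroupOf (autFix G H) = N :=
      Subgroup.comap_map_eq_self_of_injective A.subtype_injective N
    have hfi2 : (A''.subgroupOf (autFix G H)).FiniteIndex := by
      rw [hsub]; exact hNfin
    have hbig := sup_inn_finiteIndex H hconj A'' hAle hfi2
    constructor
    rw [hrange]
    show (A''.map (outProj G)).index ≠ 0
    rw [hindex]
    exact hbig.index_ne_zero
  · -- the section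
    have hbij : Function.Bijective pmap.rangeRestrict :=
      ⟨fun a b h => hpinj (congrArg Subtype.val h), pmap.rangeRestrict_surjective⟩
    set e : ↥N ≃* ↥pmap.range := MulEquiv.ofBijective pmap.rangeRestrict hbij with he
    refine ⟨(A.subtype.comp N.subtype).comp e.symm.toMonoidHom, ?_⟩
    intro x
    show outProj G (((e.symm x : ↥N) : ↥A) : MulAut G) = ↑x
    have h1 : outProj G (((e.symm x : ↥N) : ↥A) : MulAut G) = pmap (e.symm x) := rfl
    have h2 : pmap (e.symm x) = ↑(e (e.symm x)) := rfl
    rw [h1, h2, e.apply_symm_apply]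
end

section
/- Let G be a finitely generated residually finite group such that the canonical projection f : Aut(G) → Out(G) splits virtually. Then Out(G) is residually finite. -/
section Aux

variable {G : Type*} [Group G]

/-- A finitely generated group has finitely many homomorphisms into a finite group. -/
lemma finite_monoidHom_of_fg (hfg : Group.FG G) (P : Type*) [Group P] [Finite P] :
    Finite (G →* P) := by
  obtain ⟨S, hS⟩ := Group.fg_def.mp hfg
  refine Finite.of_injective (fun f : G →* P => (fun s : S => f s)) ?_
  intro f g h
  refine MonoidHom.eq_of_eqOn_dense hS ?_
  intro x hx
  exact congrFun h ⟨x, hx⟩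

/-- Any finite-index subgroup of a f.g. group contains a finite-index subgroup which is
invariant under all automorphisms. -/
lemma exists_char_le (hfg : Group.FG G) (K : Subgroup G) (hK : K.FiniteIndex) :
    ∃ N : Subgroup G, N.Normal ∧ N.FiniteIndex ∧ N ≤ K ∧
      ∀ φ : MulAut G, N.comap φ.toMonoidHom = N := by
  haveI := hK
  haveI : Finite (G ⧸ K) := Subgroup.finite_quotient_of_finiteIndex
  set P := Equiv.Perm (G ⧸ K)
  haveI : Finite (G →* P) := finite_monoidHom_of_fg hfg P
  refine ⟨⨅ ρ : G →* P, ρ.ker, ?_, ?_, ?_, ?_⟩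
  · constructor
    intro n hn g
    rw [Subgroup.mem_iInf] at hn ⊢
    exact fun ρ => (MonoidHom.normal_ker ρ).conj_mem n (hn ρ) g
  · exact Subgroup.finiteIndex_iInf fun ρ => inferInstance
  · refine le_trans (iInf_le _ (MulAction.toPermHom G (G ⧸ K))) ?_
    rw [← Subgroup.normalCore_eq_ker]
    exact Subgroup.normalCore_le K
  · intro φ
    ext x
    simp only [Subgroup.mem_comap, Subgroup.mem_iInf, MonoidHom.mem_ker]
    constructor
    · intro h σ
      have := h (σ.comp (φ.symm : G ≃* G).toMonoidHom)
      simpa using this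
    · intro h ρ
      exact h (ρ.comp φ.toMonoidHom)

/-- Package a finite discriminating quotient into the `Type 0` form demanded by
`ResiduallyFinite`. -/
lemma rf_witness {H : Type*} [Group H] [Finite H] (φ : G →* H) (g : G) (h : φ g ≠ 1) :
    ∃ (F : Type) (_ : Group F) (_ : Finite F) (ψ : G →* F), ψ g ≠ 1 := by
  haveI : Small.{0} H := Countable.toSmall H
  refine ⟨Shrink H, inferInstance, inferInstance,
    ((Shrink.mulEquiv (α := H)).symm.toMonoidHom.comp φ), ?_⟩
  intro hc
  apply h
  have := congrArg (Shrink.mulEquiv (α := H)) hc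
  simpa using this

/-- An element outside a finite-index subgroup is detected by a finite quotient. -/
lemma rf_witness_of_finiteIndex {K : Subgroup G} (hK : K.FiniteIndex) {g : G} (hg : g ∉ K) :
    ∃ (F : Type) (_ : Group F) (_ : Finite F) (ψ : G →* F), ψ g ≠ 1 := by
  haveI := hK
  haveI : Finite (G ⧸ K.normalCore) := Subgroup.finite_quotient_of_finiteIndex
  refine rf_witness (QuotientGroup.mk' K.normalCore) g ?_
  intro h
  exact hg (K.normalCore_le ((QuotientGroup.eq_one_iff g).mp h))


/-- Baumslag: the automorphism group of a f.g. residually finite group is residually finite. -/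
lemma rf_mulAut (hfg : Group.FG G) (hrf : ResiduallyFinite G) :
    ResiduallyFinite (MulAut G) := by
  intro φ hφ
  have hg : ∃ g : G, φ g ≠ g := by
    by_contra hc
    push_neg at hc
    exact hφ (MulEquiv.ext hc)
  obtain ⟨g, hgne⟩ := hg
  have ha : φ g * g⁻¹ ≠ 1 := by
    intro h
    exact hgne (by rwa [mul_inv_eq_one] at h)
  obtain ⟨F0, _, _, ψ0, hψ0⟩ := hrf _ ha
  haveI : Finite ψ0.range := Subtype.finite
  have hKfi : ψ0.ker.FiniteIndex := Subgroup.finiteIndex_ker ψ0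
  obtain ⟨N, hNnorm, hNfi, hNle, hNchar⟩ := exists_char_le hfg ψ0.ker hKfi
  haveI := hNnorm
  haveI := hNfi
  haveI : Finite (G ⧸ N) := Subgroup.finite_quotient_of_finiteIndex
  have hmap : ∀ ψ : MulAut G, N.map ((ψ : G ≃* G) : G →* G) = N := by
    intro ψ
    rw [Subgroup.map_equiv_eq_comap_symm]
    exact hNchar ψ⁻¹
  let Φ : MulAut G →* MulAut (G ⧸ N) :=
    { toFun := fun ψ => QuotientGroup.congr N N (ψ : G ≃* G) (hmap ψ)
      map_one' := by
        ext x
        refine QuotientGroup.induction_on x fun y => rfl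
      map_mul' := by
        intro a b
        ext x
        refine QuotientGroup.induction_on x fun y => rfl }
  haveI : Finite (MulAut (G ⧸ N)) := by
    refine Finite.of_injective (fun e : MulAut (G ⧸ N) => (e : Equiv.Perm (G ⧸ N))) ?_
    intro a b h
    ext x
    exact congrFun (congrArg (fun (e : Equiv.Perm (G ⧸ N)) => (e : G ⧸ N → G ⧸ N)) h) x
  refine rf_witness Φ φ ?_
  intro hc
  have h1 : Φ φ (QuotientGroup.mk g) = QuotientGroup.mk g := by rw [hc]; rfl
  have h2 : Φ φ (QuotientGroup.mk g) = QuotientGroup.mk (φ g) := rfl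
  rw [h2] at h1
  have h3 : (φ g)⁻¹ * g ∈ N := QuotientGroup.eq.mp h1
  have h4 : φ g * g⁻¹ ∈ N := by
    have := hNnorm.conj_mem _ (N.inv_mem h3) (φ g)
    simpa [mul_assoc] using this
  exact hψ0 (MonoidHom.mem_ker.mp (hNle h4))

/-- Residual finiteness passes from a finite-index subgroup to the whole group. -/
lemma rf_of_finiteIndex_subgroup {H : Subgroup G} (hH : H.FiniteIndex)
    (hrf : ResiduallyFinite H) : ResiduallyFinite G := by
  intro g hg
  by_cases hgH : g ∈ H
  · have hne : (⟨g, hgH⟩ : H) ≠ 1 := by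
      intro h
      exact hg (congrArg Subtype.val h)
    obtain ⟨F, _, _, ψ, hψ⟩ := hrf _ hne
    haveI : Finite ψ.range := Subtype.finite
    haveI : ψ.ker.FiniteIndex := Subgroup.finiteIndex_ker ψ
    have hKfi : (ψ.ker.map H.subtype).FiniteIndex := by
      constructor
      rw [Subgroup.index_map_subtype]
      exact Nat.mul_ne_zero (Subgroup.FiniteIndex.index_ne_zero) hH.index_ne_zero
    have hgK : g ∉ ψ.ker.map H.subtype := by
      rintro ⟨k, hk, hk2⟩
      apply hψ
      have : k = (⟨g, hgH⟩ : H) := Subtype.ext hk2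
      rwa [this] at hk
    exact rf_witness_of_finiteIndex hKfi hgK
  · exact rf_witness_of_finiteIndex hH hgH

end Aux


/-- If `G` is a finitely generated residually finite group and
`Aut(G) → Out(G)` splits virtually, then `Out(G)` is residually finite. -/
theorem statement1 (G : Type*) [Group G] (hfg : Group.FG G) (hrf : ResiduallyFinite G)
    (hsplit : SplitsVirtually (outProj G)) :
    ResiduallyFinite (Out G) := by
  obtain ⟨B', hB', s, hs⟩ := hsplit
  have hrfB' : ResiduallyFinite B' := by
    intro x hx
    have hsx : s x ≠ 1 := by
      intro h
      apply hx
      have := hs x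
      rw [h, map_one] at this
      exact Subtype.ext this.symm
    obtain ⟨F, _, _, ψ, hψ⟩ := rf_mulAut hfg hrf (s x) hsx
    exact ⟨F, ‹_›, ‹_›, ψ.comp s, hψ⟩
  exact rf_of_finiteIndex_subgroup hB' hrfB'
end

section
/- Let G be a group such that Aut(G) is residually finite, and let H ≤ G be an Aut-splitting subgroup of G. Then the canonical projection f : Aut(G) → Out(G) splits virtually; moreover Out(G) is residually finite. -/
section Aux

variable {A : Type*} [Group A]

lemma aux_resfin_of_injective {B : Type*} [Group B] (i : B →* A)
    (hi : Function.Injective i) (h : ResiduallyFinite A) : ResiduallyFinite B := by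
  intro b hb
  have hib : i b ≠ 1 := fun hc => hb (hi (hc.trans (map_one i).symm))
  obtain ⟨F, hF1, hF2, φ, hφ⟩ := h (i b) hib
  exact ⟨F, hF1, hF2, φ.comp i, hφ⟩

lemma aux_exists_fi (h : ResiduallyFinite A) {a : A} (ha : a ≠ 1) :
    ∃ M : Subgroup A, M.FiniteIndex ∧ a ∉ M := by
  obtain ⟨F, hF1, hF2, φ, hφ⟩ := h a ha
  haveI : Finite (A ⧸ φ.ker) := Finite.of_injective _ (QuotientGroup.kerLift_injective φ)
  exact ⟨φ.ker, Subgroup.finiteIndex_of_finite_quotient,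
    fun hm => hφ (MonoidHom.mem_ker.mp hm)⟩

lemma aux_resfin_of_forall
    (h : ∀ a : A, a ≠ 1 → ∃ M : Subgroup A, M.FiniteIndex ∧ a ∉ M) :
    ResiduallyFinite A := by
  intro a ha
  obtain ⟨M, hM, haM⟩ := h a ha
  haveI := hM
  haveI : Finite (A ⧸ M.normalCore) := Subgroup.finite_quotient_of_finiteIndex
  have eqv : (Shrink (A ⧸ M.normalCore) : Type) ≃* (A ⧸ M.normalCore) := Shrink.mulEquiv
  refine ⟨(Shrink (A ⧸ M.normalCore) : Type), inferInstance, Finite.of_equiv _ (equivShrink _),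
    eqv.symm.toMonoidHom.comp (QuotientGroup.mk' M.normalCore), ?_⟩
  intro hc
  have h1 : (QuotientGroup.mk' M.normalCore) a = 1 := by
    have h2 := congrArg eqv hc
    simpa using h2
  exact haM (M.normalCore_le ((QuotientGroup.eq_one_iff a).mp h1))

lemma aux_map_subtype_finiteIndex {B : Subgroup A} (hB : B.FiniteIndex)
    {M : Subgroup B} (hM : M.FiniteIndex) : (M.map B.subtype).FiniteIndex := by
  constructor
  rw [Subgroup.index_map_subtype]
  exact Nat.mul_ne_zero hM.index_ne_zero hB.index_ne_zero

lemma aux_resfin_of_finiteIndex (B : Subgroup A) (hB : B.FiniteIndex)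
    (h : ResiduallyFinite B) : ResiduallyFinite A := by
  apply aux_resfin_of_forall
  intro a ha
  by_cases haB : a ∈ B
  · have ha' : (⟨a, haB⟩ : B) ≠ 1 := fun hc => ha (by simpa using congrArg Subtype.val hc)
    obtain ⟨M, hM, hmem⟩ := aux_exists_fi h ha'
    refine ⟨M.map B.subtype, aux_map_subtype_finiteIndex hB hM, ?_⟩
    rintro ⟨m, hm, hma⟩
    exact hmem ((Subtype.ext hma : m = ⟨a, haB⟩) ▸ hm)
  · exact ⟨B, hB, haB⟩

end Aux

/-- If `Aut(G)` is residually finite and `H` is an Aut-splitting subgroup of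
`G`, then `Aut(G) → Out(G)` splits virtually and `Out(G)` is residually finite. -/
theorem statement9 (G : Type*) [Group G] (hrf : ResiduallyFinite (MulAut G))
    (H : Subgroup G) (hH : IsAutSplitting G H) :
    SplitsVirtually (outProj G) ∧ ResiduallyFinite (Out G) := by
  classical
  obtain ⟨hker, himg⟩ := hH
  set A₀ := autFix G H with hA₀
  set r : A₀ →* Out G := (outProj G).comp A₀.subtype with hr
  have hrfA₀ : ResiduallyFinite A₀ :=
    aux_resfin_of_injective A₀.subtype A₀.subtype_injective hrf
  haveI : Finite r.ker := hker
  have hchoice : ∀ k : r.ker, ∃ M : Subgroup A₀, M.FiniteIndex ∧ ((k : A₀) ≠ 1 → (k : A₀) ∉ M) := by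
    intro k
    by_cases hk : (k : A₀) = 1
    · exact ⟨⊤, inferInstance, fun h => absurd hk h⟩
    · obtain ⟨M, h1, h2⟩ := aux_exists_fi hrfA₀ hk
      exact ⟨M, h1, fun _ => h2⟩
  choose Ms hMs1 hMs2 using hchoice
  set N : Subgroup A₀ := ⨅ k : r.ker, Ms k with hNdef
  haveI hNfi : N.FiniteIndex := Subgroup.finiteIndex_iInf hMs1
  set e : (↥N) →* Out G := r.comp N.subtype with he
  have hinj : Function.Injective e := by
    rw [← MonoidHom.ker_eq_bot_iff]
    rw [eq_bot_iff]
    intro x hx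
    have hxk : (↑x : A₀) ∈ r.ker := MonoidHom.mem_ker.mp hx
    rw [Subgroup.mem_bot]
    by_contra hx1
    have hx1' : ((⟨(↑x : A₀), hxk⟩ : r.ker) : A₀) ≠ 1 := by
      intro hc
      exact hx1 (Subtype.ext hc)
    have hmem : ∀ k, (↑x : A₀) ∈ Ms k := Subgroup.mem_iInf.mp x.2
    exact hMs2 _ hx1' (hmem _)
  have hrange : e.range = Subgroup.map r N := by
    rw [he, MonoidHom.range_comp, Subgroup.range_subtype]
  have hAmap : r.range = A₀.map (outProj G) := by
    rw [hr, MonoidHom.range_comp, Subgroup.range_subtype]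
  have hfi : e.range.FiniteIndex := by
    rw [hrange]
    constructor
    rw [Subgroup.index_map]
    have h1 : (N ⊔ r.ker).FiniteIndex := Subgroup.finiteIndex_of_le le_sup_left
    have h2 : r.range.FiniteIndex := by rw [hAmap]; exact himg
    exact Nat.mul_ne_zero h1.index_ne_zero h2.index_ne_zero
  set s : (↥e.range) →* MulAut G :=
    (A₀.subtype.comp N.subtype).comp (MonoidHom.ofInjective hinj).symm.toMonoidHom with hs
  have hsec : ∀ x : e.range, outProj G (s x) = (x : Out G) := fun x =>
    MonoidHom.apply_ofInjective_symm hinj x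
  have hinjs : Function.Injective s := by
    intro a b hab
    apply (MonoidHom.ofInjective hinj).symm.injective
    exact Subtype.ext (Subtype.ext hab)
  refine ⟨⟨e.range, hfi, s, hsec⟩, ?_⟩
  exact aux_resfin_of_finiteIndex e.range hfi (aux_resfin_of_injective s hinjs hrf)
end

section
/- Let G be a group and H ≤ G a subgroup such that (1) there are only finitely many conjugacy classes of subgroups of G isomorphic to H (i.e. the set of subgroups of G isomorphic to H is a finite union of orbits under conjugation by G), and (2) the normalizer N_G(H) is finite. Then H is an Aut-splitting subgroup of G. -/
/-- If there are finitely many conjugacy classes of subgroups of `G`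
isomorphic to `H` and `N_G(H)` is finite, then `H` is an Aut-splitting subgroup of `G`. -/
theorem statement14 (G : Type*) [Group G] (H : Subgroup G)
    (hconj : ∃ S : Finset (Subgroup G), ∀ K : Subgroup G, Nonempty (↥K ≃* ↥H) →
      ∃ K' ∈ S, ∃ g : G, conjSubgroup G g K = K')
    (hnorm : Finite (Subgroup.normalizer (H : Set G))) :
    IsAutSplitting G H := by
  classical
  obtain ⟨S, hS⟩ := hconj
  have hHfin : Finite ↥H :=
    Finite.of_injective (Subgroup.inclusion (Subgroup.le_normalizer (H := H))) (Subgroup.inclusion_injective _)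
  constructor
  · -- kernel is finite
    have hcent_le : Subgroup.centralizer (H : Set G) ≤ Subgroup.normalizer (H : Set G) := by
      intro c hc
      rw [Subgroup.mem_centralizer_iff] at hc
      intro h
      constructor
      · intro hh
        have h1 : c * h * c⁻¹ = h := mul_inv_eq_iff_eq_mul.mpr (hc h hh).symm
        rw [h1]; exact hh
      · intro hh
        have h1 : (c * h * c⁻¹) * c = c * (c * h * c⁻¹) := hc _ hh
        have h3 : c * h = c * (c * h * c⁻¹) := by rw [← h1]; group
        have h4 : h = c * h * c⁻¹ := mul_left_cancel h3
        rw [h4]; exact hh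
    have hCfin : Finite ↥(Subgroup.centralizer (H : Set G)) :=
      Finite.of_injective (Subgroup.inclusion hcent_le) (Subgroup.inclusion_injective _)
    have hfixmem : ∀ c : ↥(Subgroup.centralizer (H : Set G)),
        MulAut.conj (c : G) ∈ autFix G H := by
      intro c h hh
      have h1 : h * (c : G) = (c : G) * h := (Subgroup.mem_centralizer_iff.mp c.2) h hh
      show (c : G) * h * (c : G)⁻¹ = h
      rw [← h1]; group
    refine Finite.of_surjective (α := ↥(Subgroup.centralizer (H : Set G)))
      (fun c => ⟨⟨MulAut.conj (c : G), hfixmem c⟩, ?_⟩) ?_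
    · show MulAut.conj (c : G) ∈ (outProj G).ker
      rw [show (outProj G).ker = Inn G from QuotientGroup.ker_mk' _]
      exact ⟨(c : G), rfl⟩
    · rintro ⟨⟨φ, hfix⟩, hker⟩
      have hker' : φ ∈ (outProj G).ker := hker
      rw [show (outProj G).ker = Inn G from QuotientGroup.ker_mk' _] at hker'
      obtain ⟨c, hc⟩ := hker'
      have hcmem : c ∈ Subgroup.centralizer (H : Set G) := by
        rw [Subgroup.mem_centralizer_iff]
        intro h hh
        have h1 : φ h = h := hfix h hh
        rw [← hc] at h1
        have h2 : c * h * c⁻¹ = h := h1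
        calc h * c = (c * h * c⁻¹) * c := by rw [h2]
        _ = c * h := by group
      refine ⟨⟨c, hcmem⟩, ?_⟩
      ext
      exact congrFun (congrArg _ hc) _
  · -- image has finite index
    have hex : ∀ φ : MulAut G, ∃ g : G, ∃ K' ∈ S,
        conjSubgroup G g (H.map φ.toMonoidHom) = K' := by
      intro φ
      obtain ⟨K', hK'S, g, hg⟩ := hS (H.map φ.toMonoidHom)
        ⟨(H.equivMapOfInjective φ.toMonoidHom φ.injective).symm⟩
      exact ⟨g, K', hK'S, hg⟩
    choose g hg using hex
    set i : MulAut G → (↥H → G) := fun φ h => g φ * φ h * (g φ)⁻¹ with hi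
    have hrange : ∀ φ : MulAut G,
        Set.range (i φ) = ↑(conjSubgroup G (g φ) (H.map φ.toMonoidHom)) := by
      intro φ
      ext x
      constructor
      · rintro ⟨h, rfl⟩
        exact ⟨φ h, ⟨h, h.2, rfl⟩, rfl⟩
      · rintro ⟨y, ⟨h, hh, rfl⟩, rfl⟩
        exact ⟨⟨h, hh⟩, rfl⟩
    have hfin : (Set.range i).Finite := by
      have hsub : Set.range i ⊆ ⋃ K' ∈ (S : Set (Subgroup G)),
          {f : ↥H → G | Set.range f = ↑K'} := by
        rintro f ⟨φ, rfl⟩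
        obtain ⟨K', hK'S, hK'⟩ := hg φ
        exact Set.mem_biUnion hK'S (by rw [Set.mem_setOf_eq, hrange φ, hK'])
      refine Set.Finite.subset (Set.Finite.biUnion S.finite_toSet ?_) hsub
      intro K' _
      rcases Set.eq_empty_or_nonempty {f : ↥H → G | Set.range f = ↑K'} with he | ⟨f₀, hf₀⟩
      · rw [he]; exact Set.finite_empty
      · have hK'fin : (↑K' : Set G).Finite := by
          rw [← hf₀]; exact Set.finite_range f₀
        refine Set.Finite.subset (Set.Finite.pi (fun _ : ↥H => hK'fin)) ?_
        intro f hf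
        rw [Set.mem_univ_pi]
        intro h
        rw [← hf]
        exact ⟨h, rfl⟩
    have hkey : ∀ φ ψ : MulAut G, i φ = i ψ → φ⁻¹ * ψ ∈ autFix G H ⊔ Inn G := by
      intro φ ψ hiφψ
      have hτ : (MulAut.conj (g φ) * φ)⁻¹ * (MulAut.conj (g ψ) * ψ) ∈ autFix G H := by
        intro h hh
        show ((MulAut.conj (g φ) * φ)⁻¹) ((MulAut.conj (g ψ) * ψ) h) = h
        have heq : (MulAut.conj (g ψ) * ψ) h = (MulAut.conj (g φ) * φ) h := by
          have := congrFun hiφψ ⟨h, hh⟩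
          exact (this).symm
        rw [heq, MulAut.inv_def]
        exact (MulAut.conj (g φ) * φ).symm_apply_apply h
      have hinn : φ⁻¹ * ((MulAut.conj (g ψ))⁻¹ * MulAut.conj (g φ)) * φ ∈ Inn G := by
        have hc : (MulAut.conj (g ψ))⁻¹ * MulAut.conj (g φ) ∈ Inn G :=
          mul_mem (inv_mem ⟨g ψ, rfl⟩) ⟨g φ, rfl⟩
        have := (Inn.normal G).conj_mem _ hc φ⁻¹
        simpa using this
      have heq2 : φ⁻¹ * ψ =
          (φ⁻¹ * ((MulAut.conj (g ψ))⁻¹ * MulAut.conj (g φ)) * φ) *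
            ((MulAut.conj (g φ) * φ)⁻¹ * (MulAut.conj (g ψ) * ψ)) := by
        group
      rw [heq2]
      exact mul_mem (Subgroup.mem_sup_right hinn) (Subgroup.mem_sup_left hτ)
    have hquot : Finite (MulAut G ⧸ (autFix G H ⊔ Inn G)) := by
      have : Finite ↥(Set.range i) := hfin.to_subtype
      refine Finite.of_surjective
        (fun x : Set.range i => (QuotientGroup.mk (Classical.choose x.2) :
          MulAut G ⧸ (autFix G H ⊔ Inn G))) ?_
      intro q
      induction q using QuotientGroup.induction_on with
      | H φ =>
        refine ⟨⟨i φ, ⟨φ, rfl⟩⟩, ?_⟩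
        have hspec : i (Classical.choose (⟨φ, rfl⟩ : ∃ ψ, i ψ = i φ)) = i φ :=
          Classical.choose_spec (⟨φ, rfl⟩ : ∃ ψ, i ψ = i φ)
        exact (QuotientGroup.eq).mpr (hkey _ _ hspec)
    haveI := hquot
    have hKidx : (autFix G H ⊔ Inn G).FiniteIndex :=
      Subgroup.finiteIndex_of_finite_quotient
    constructor
    rw [Subgroup.index_map]
    have hker : (outProj G).ker = Inn G := QuotientGroup.ker_mk' _
    have hrangetop : (outProj G).range = ⊤ :=
      MonoidHom.range_eq_top_of_surjective _ (QuotientGroup.mk'_surjective _)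
    rw [hker, hrangetop, Subgroup.index_top, mul_one]
    exact hKidx.index_ne_zero
end

section
/- Let G be a group admitting a self-normalized Aut-splitting subgroup H (i.e. N_G(H) = H) whose center Z(H) is trivial. Then the restriction of the canonical projection f : Aut(G) → Out(G) to Aut_{H̲}(G) is injective, and consequently the map f : Aut(G) → Out(G) splits virtually. -/
/-- If `H` is a self-normalized Aut-splitting subgroup of `G` with trivial
center, then the restriction of `Aut(G) → Out(G)` to `Aut_{H̲}(G)` is injective, and
`Aut(G) → Out(G)` splits virtually. -/
theorem statement16 (G : Type*) [Group G] (H : Subgroup G) (hself : Subgroup.normalizer (H : Set G) = H)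
    (hsplit : IsAutSplitting G H) (hcenter : Subgroup.center ↥H = ⊥) :
    Function.Injective ((outProj G).comp (autFix G H).subtype) ∧
      SplitsVirtually (outProj G) := by
  have hinj : Function.Injective ((outProj G).comp (autFix G H).subtype) := by
    rw [injective_iff_map_eq_one]
    intro φ hφ
    have hmem : (φ : MulAut G) ∈ Inn G := by
      have : (outProj G) (φ : MulAut G) = 1 := hφ
      exact (QuotientGroup.eq_one_iff (N := Inn G) (φ : MulAut G)).mp this
    obtain ⟨g, hg⟩ := hmem
    have hfix : ∀ h ∈ H, g * h * g⁻¹ = h := by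
      intro h hh
      have := φ.2 h hh
      rw [← hg] at this
      simpa [MulAut.conj_apply] using this
    have hgH : g ∈ H := by
      rw [← hself, Subgroup.mem_normalizer_iff]
      intro h
      constructor
      · intro hh; rw [hfix h hh]; exact hh
      · intro hh
        have h2 := hfix _ hh
        have : g * h * g⁻¹ = g * (g * h * g⁻¹) * g⁻¹ := by
          rw [h2]
        have heq : h = g * h * g⁻¹ := by
          have e : g⁻¹ * (g * (g * h * g⁻¹) * g⁻¹) * g = g⁻¹ * (g * h * g⁻¹) * g := by rw [h2]
          rw [show g⁻¹ * (g * (g * h * g⁻¹) * g⁻¹) * g = g * h * g⁻¹ by group,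
            show g⁻¹ * (g * h * g⁻¹) * g = h by group] at e
          exact e.symm
        rw [heq]; exact hh
    have hz : (⟨g, hgH⟩ : H) ∈ Subgroup.center H := by
      rw [Subgroup.mem_center_iff]
      intro ⟨h, hh⟩
      have := hfix h hh
      ext
      simp only [Subgroup.coe_mul]
      calc h * g = g * h * g⁻¹ * g := by rw [this]
      _ = g * h := by group
    rw [hcenter, Subgroup.mem_bot] at hz
    have hg1 : g = 1 := by simpa using congrArg Subtype.val hz
    have : (φ : MulAut G) = 1 := by rw [← hg, hg1]; ext x; simp
    exact Subtype.ext this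
  refine ⟨hinj, ?_⟩
  set f := (outProj G).comp (autFix G H).subtype with hf
  have hrange : f.range = (autFix G H).map (outProj G) := by
    rw [hf, MonoidHom.range_comp, Subgroup.range_subtype]
  refine ⟨f.range, by rw [hrange]; exact hsplit.2, ?_⟩
  refine ⟨(autFix G H).subtype.comp ((MonoidHom.ofInjective hinj).symm.toMonoidHom), ?_⟩
  intro x
  exact MonoidHom.apply_ofInjective_symm hinj x
end
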